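/- Let F be a family of conjunctions of degree ≤ d over variables x₁,…,xₙ such that every t of them are jointly inconsistent (the product of any t distinct members of F is identically zero as a multilinear polynomial), with (t−1)d² ≤ n. Then for any degree-D pseudoexpectation operator E~ with D ≥ (t−1)d², we have ∑_{C ∈ F} E~[C] ≤ t − 1. -/

import Mathlib

noncomputable def Econj (n : ℕ) (E : Finset (Fin n) → ℝ)
    (S T : Finset (Fin n)) : ℝ :=
  ∑ A ∈ T.powerset, (-1 : ℝ) ^ A.card * E (S ∪ A)

/-- `x` satisfies the conjunction `C_{S,T}` encoded as the pair `p = (S,T)`. -/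
def Sat (n : ℕ) (x : Fin n → Bool) (p : Finset (Fin n) × Finset (Fin n)) : Prop :=
  (∀ i ∈ p.1, x i = true) ∧ (∀ j ∈ p.2, x j = false)

lemma econj_zero {n : ℕ} (E : Finset (Fin n) → ℝ) {S T : Finset (Fin n)} {i : Fin n}
    (hiS : i ∈ S) (hiT : i ∈ T) : Econj n E S T = 0 := by
  have h1 : T = insert i (T.erase i) := (Finset.insert_erase hiT).symm
  rw [h1]
  unfold Econj
  rw [Finset.sum_powerset_insert (Finset.notMem_erase i T)]
  have hcg : ∀ A ∈ (T.erase i).powerset,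
      (-1:ℝ)^(insert i A).card * E (S ∪ insert i A) = -((-1:ℝ)^A.card * E (S ∪ A)) := by
    intro A hA
    have hiA : i ∉ A := fun h => Finset.notMem_erase i T (Finset.mem_powerset.mp hA h)
    have hU : S ∪ insert i A = S ∪ A := by
      rw [Finset.union_insert, Finset.insert_eq_self.mpr (Finset.mem_union_left A hiS)]
    rw [Finset.card_insert_of_notMem hiA, hU, pow_succ]
    ring
  rw [Finset.sum_congr rfl hcg]
  simp

lemma econj_split {n : ℕ} (E : Finset (Fin n) → ℝ) (S T : Finset (Fin n)) (i : Fin n) :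
    Econj n E S T = Econj n E (insert i S) T + Econj n E S (insert i T) := by
  by_cases hiT : i ∈ T
  · rw [Finset.insert_eq_self.mpr hiT,
      econj_zero E (Finset.mem_insert_self i S) hiT, zero_add]
  · conv_rhs => rw [Econj, Econj, Finset.sum_powerset_insert hiT]
    have hcg : ∀ A ∈ T.powerset,
        (-1:ℝ)^(insert i A).card * E (S ∪ insert i A)
          = -((-1:ℝ)^A.card * E (insert i S ∪ A)) := by
      intro A hA
      have hiA : i ∉ A := fun h => hiT (Finset.mem_powerset.mp hA h)
      rw [Finset.card_insert_of_notMem hiA, Finset.union_insert, ← Finset.insert_union,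
        pow_succ]
      ring
    rw [Finset.sum_congr rfl hcg]
    unfold Econj
    simp

lemma dtb_main (n d D t : ℕ) (ht : 1 ≤ t)
    (F : Finset (Finset (Fin n) × Finset (Fin n)))
    (hdeg : ∀ p ∈ F, Disjoint p.1 p.2 ∧ p.1.card + p.2.card ≤ d)
    (hincons : ∀ G ⊆ F, G.card = t → ¬ ∃ x : Fin n → Bool, ∀ p ∈ G, Sat n x p)
    (E : Finset (Fin n) → ℝ)
    (hnonneg : ∀ S T : Finset (Fin n), Disjoint S T → S.card + T.card ≤ D →
      0 ≤ Econj n E S T) :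
    ∀ (w : ℕ) (S T : Finset (Fin n)), Disjoint S T →
      S.card + T.card + (t-1)*(w*w) ≤ D →
      (∀ p ∈ F, Disjoint p.1 T → Disjoint p.2 S → ((p.1 ∪ p.2) \ (S ∪ T)).card ≤ w) →
      ∑ p ∈ F, Econj n E (p.1 ∪ S) (p.2 ∪ T) ≤ ((t:ℝ) - 1) * Econj n E S T := by
  classical
  intro w
  induction w with
  | zero =>
    intro S T hST hbud hw
    have hD' : S.card + T.card ≤ D := le_trans (Nat.le_add_right _ _) hbud
    have hpos : 0 ≤ Econj n E S T := hnonneg S T hST hD'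
    rw [← Finset.sum_filter_add_sum_filter_not F (fun p => p.1 ⊆ S ∧ p.2 ⊆ T)]
    have h2 : ∑ p ∈ F.filter (fun p => ¬(p.1 ⊆ S ∧ p.2 ⊆ T)),
        Econj n E (p.1 ∪ S) (p.2 ∪ T) = 0 := by
      apply Finset.sum_eq_zero
      intro p hp
      obtain ⟨hpF, hnimp⟩ := Finset.mem_filter.mp hp
      by_cases hlive : Disjoint p.1 T ∧ Disjoint p.2 S
      · exfalso
        have h0 := hw p hpF hlive.1 hlive.2
        have hsub : p.1 ∪ p.2 ⊆ S ∪ T := by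
          intro x hx
          by_contra hxn
          have hmem : x ∈ (p.1 ∪ p.2) \ (S ∪ T) := Finset.mem_sdiff.mpr ⟨hx, hxn⟩
          have := Finset.card_pos.mpr ⟨x, hmem⟩
          omega
        apply hnimp
        constructor
        · intro x hx
          rcases Finset.mem_union.mp (hsub (Finset.mem_union_left _ hx)) with h | h
          · exact h
          · exact absurd h (Finset.disjoint_left.mp hlive.1 hx)
        · intro x hx
          rcases Finset.mem_union.mp (hsub (Finset.mem_union_right _ hx)) with h | h
          · exact absurd h (Finset.disjoint_left.mp hlive.2 hx)
          · exact h
      · rw [not_and_or] at hlive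
        rcases hlive with h | h
        · obtain ⟨v, hv1, hv2⟩ := Finset.not_disjoint_iff.mp h
          exact econj_zero E (Finset.mem_union_left _ hv1) (Finset.mem_union_right _ hv2)
        · obtain ⟨v, hv1, hv2⟩ := Finset.not_disjoint_iff.mp h
          exact econj_zero E (Finset.mem_union_right _ hv2) (Finset.mem_union_left _ hv1)
    have h1 : ∑ p ∈ F.filter (fun p => p.1 ⊆ S ∧ p.2 ⊆ T),
        Econj n E (p.1 ∪ S) (p.2 ∪ T)
        = (F.filter (fun p => p.1 ⊆ S ∧ p.2 ⊆ T)).card • Econj n E S T := by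
      rw [← Finset.sum_const]
      apply Finset.sum_congr rfl
      intro p hp
      obtain ⟨-, hp1, hp2⟩ := Finset.mem_filter.mp hp
      rw [Finset.union_eq_right.mpr hp1, Finset.union_eq_right.mpr hp2]
    have hcard : (F.filter (fun p => p.1 ⊆ S ∧ p.2 ⊆ T)).card ≤ t - 1 := by
      by_contra hc
      push_neg at hc
      obtain ⟨G, hGsub, hGcard⟩ :=
        Finset.exists_subset_card_eq (s := F.filter (fun p => p.1 ⊆ S ∧ p.2 ⊆ T)) (n := t) (by omega)
      refine hincons G (hGsub.trans (Finset.filter_subset _ _)) hGcard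
        ⟨fun i => decide (i ∈ S), ?_⟩
      intro p hpG
      obtain ⟨-, hp1, hp2⟩ := Finset.mem_filter.mp (hGsub hpG)
      exact ⟨fun i hi => decide_eq_true (hp1 hi),
             fun j hj => decide_eq_false (Finset.disjoint_right.mp hST (hp2 hj))⟩
    have hcast : ((F.filter (fun p => p.1 ⊆ S ∧ p.2 ⊆ T)).card : ℝ) ≤ (t:ℝ) - 1 := by
      calc ((F.filter (fun p => p.1 ⊆ S ∧ p.2 ⊆ T)).card : ℝ)
          ≤ ((t-1 : ℕ) : ℝ) := Nat.cast_le.mpr hcard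
        _ = (t:ℝ) - 1 := by rw [Nat.cast_sub ht, Nat.cast_one]
    rw [h1, h2, add_zero, nsmul_eq_mul]
    exact mul_le_mul_of_nonneg_right hcast hpos
  | succ w ih =>
    intro S T hST hbud hw
    -- choose a maximal pairwise-consistent set M of live conjunctions
    have hne : ((F.filter (fun p => Disjoint p.1 T ∧ Disjoint p.2 S)).powerset.filter
        (fun M => ∀ p ∈ M, ∀ q ∈ M, Disjoint p.1 q.2)).Nonempty := ⟨∅, by simp⟩
    obtain ⟨M, hMmem, hMmax⟩ := Finset.exists_max_image _ Finset.card hne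
    obtain ⟨hMsub', hMpw⟩ := Finset.mem_filter.mp hMmem
    have hMsub : M ⊆ F.filter (fun p => Disjoint p.1 T ∧ Disjoint p.2 S) :=
      Finset.mem_powerset.mp hMsub'
    have hMcard : M.card ≤ t - 1 := by
      by_contra hc
      push_neg at hc
      obtain ⟨G, hGsub, hGcard⟩ := Finset.exists_subset_card_eq (s := M) (n := t) (by omega)
      refine hincons G (fun p hp => (Finset.mem_filter.mp (hMsub (hGsub hp))).1) hGcard
        ⟨fun i => decide (i ∈ M.biUnion Prod.fst), ?_⟩
      intro p hpG
      refine ⟨fun i hi => decide_eq_true (Finset.mem_biUnion.mpr ⟨p, hGsub hpG, hi⟩),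
              fun j hj => decide_eq_false ?_⟩
      intro hj'
      obtain ⟨q, hqM, hjq⟩ := Finset.mem_biUnion.mp hj'
      exact Finset.disjoint_right.mp (hMpw q hqM p (hGsub hpG)) hj hjq
    have hMmax' : ∀ p ∈ F.filter (fun p => Disjoint p.1 T ∧ Disjoint p.2 S), p ∉ M →
        ∃ m ∈ M, ¬ Disjoint p.1 m.2 ∨ ¬ Disjoint m.1 p.2 := by
      intro p hpF hpM
      by_contra hno
      push_neg at hno
      have hins : insert p M ∈ (F.filter (fun p => Disjoint p.1 T ∧ Disjoint p.2 S)).powerset.filter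
          (fun M => ∀ a ∈ M, ∀ b ∈ M, Disjoint a.1 b.2) := by
        rw [Finset.mem_filter, Finset.mem_powerset]
        refine ⟨Finset.insert_subset hpF hMsub, ?_⟩
        intro a ha b hb
        rcases Finset.mem_insert.mp ha with rfl | ha <;>
          rcases Finset.mem_insert.mp hb with h | hb
        · exact h ▸ (hdeg a (Finset.mem_filter.mp hpF).1).1
        · exact (hno b hb).1
        · exact h ▸ (hno a ha).2
        · exact hMpw a ha b hb
      have hle := hMmax _ hins
      rw [Finset.card_insert_of_notMem hpM] at hle
      omega
    -- the set of variables of M still to be queried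
    have hQcard : ((M.biUnion (fun p => p.1 ∪ p.2)) \ (S ∪ T)).card ≤ (t-1) * (w+1) := by
      have h1 : (M.biUnion (fun p => p.1 ∪ p.2)) \ (S ∪ T)
          ⊆ M.biUnion (fun p => (p.1 ∪ p.2) \ (S ∪ T)) := by
        intro x hx
        obtain ⟨hxV, hxST⟩ := Finset.mem_sdiff.mp hx
        obtain ⟨p, hpM, hxp⟩ := Finset.mem_biUnion.mp hxV
        exact Finset.mem_biUnion.mpr ⟨p, hpM, Finset.mem_sdiff.mpr ⟨hxp, hxST⟩⟩
      calc ((M.biUnion (fun p => p.1 ∪ p.2)) \ (S ∪ T)).card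
          ≤ (M.biUnion (fun p => (p.1 ∪ p.2) \ (S ∪ T))).card := Finset.card_le_card h1
        _ ≤ ∑ p ∈ M, ((p.1 ∪ p.2) \ (S ∪ T)).card := Finset.card_biUnion_le
        _ ≤ M.card * (w+1) := by
            have := Finset.sum_le_card_nsmul M (fun p => ((p.1 ∪ p.2) \ (S ∪ T)).card) (w+1)
              (fun p hp => by
                obtain ⟨hpF, hl1, hl2⟩ := Finset.mem_filter.mp (hMsub hp)
                exact hw p hpF hl1 hl2)
            simpa using this
        _ ≤ (t-1)*(w+1) := Nat.mul_le_mul_right _ hMcard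
    have inner : ∀ (q : ℕ) (Q S' T' : Finset (Fin n)), Q.card = q →
        Disjoint S' T' → Disjoint Q (S' ∪ T') → S ⊆ S' → T ⊆ T' →
        S'.card + T'.card + Q.card + (t-1)*(w*w) ≤ D →
        (M.biUnion (fun p => p.1 ∪ p.2)) ⊆ S' ∪ T' ∪ Q →
        ∑ p ∈ F, Econj n E (p.1 ∪ S') (p.2 ∪ T') ≤ ((t:ℝ) - 1) * Econj n E S' T' := by
      intro q
      induction q with
      | zero =>
        intro Q S' T' hQ0 hS'T' hQd hSS' hTT' hbud' hcov
        have hQe : Q = ∅ := Finset.card_eq_zero.mp hQ0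
        subst hQe
        rw [Finset.union_empty] at hcov
        apply ih S' T' hS'T' (by simpa using hbud')
        intro p hpF hl1' hl2'
        have hl1 : Disjoint p.1 T := Finset.disjoint_of_subset_right hTT' hl1'
        have hl2 : Disjoint p.2 S := Finset.disjoint_of_subset_right hSS' hl2'
        by_cases hpM : p ∈ M
        · have hempty : (p.1 ∪ p.2) \ (S' ∪ T') = ∅ := by
            rw [Finset.sdiff_eq_empty_iff_subset]
            intro x hx
            exact hcov (Finset.mem_biUnion.mpr ⟨p, hpM, hx⟩)
          simp [hempty]
        · obtain ⟨m, hmM, hconf⟩ := hMmax' p (Finset.mem_filter.mpr ⟨hpF, hl1, hl2⟩) hpM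
          obtain ⟨hmF, hm1, hm2⟩ := Finset.mem_filter.mp (hMsub hmM)
          obtain ⟨v, hvp, hvS'T', hvnotST⟩ :
              ∃ v, v ∈ p.1 ∪ p.2 ∧ v ∈ S' ∪ T' ∧ v ∉ S ∪ T := by
            rcases hconf with h | h
            · obtain ⟨v, hv1, hv2⟩ := Finset.not_disjoint_iff.mp h
              refine ⟨v, Finset.mem_union_left _ hv1,
                hcov (Finset.mem_biUnion.mpr ⟨m, hmM, Finset.mem_union_right _ hv2⟩), ?_⟩
              intro hvST
              rcases Finset.mem_union.mp hvST with h' | h'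
              · exact Finset.disjoint_left.mp hm2 hv2 h'
              · exact Finset.disjoint_left.mp hl1 hv1 h'
            · obtain ⟨v, hv1, hv2⟩ := Finset.not_disjoint_iff.mp h
              refine ⟨v, Finset.mem_union_right _ hv2,
                hcov (Finset.mem_biUnion.mpr ⟨m, hmM, Finset.mem_union_left _ hv1⟩), ?_⟩
              intro hvST
              rcases Finset.mem_union.mp hvST with h' | h'
              · exact Finset.disjoint_left.mp hl2 hv2 h'
              · exact Finset.disjoint_left.mp hm1 hv1 h'
          have hwp := hw p hpF hl1 hl2
          have hsub2 : (p.1 ∪ p.2) \ (S' ∪ T') ⊆ ((p.1 ∪ p.2) \ (S ∪ T)).erase v := by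
            intro x hx
            obtain ⟨hx1, hx2⟩ := Finset.mem_sdiff.mp hx
            refine Finset.mem_erase.mpr ⟨?_, Finset.mem_sdiff.mpr ⟨hx1, ?_⟩⟩
            · rintro rfl; exact hx2 hvS'T'
            · intro hxST
              apply hx2
              rcases Finset.mem_union.mp hxST with h' | h'
              · exact Finset.mem_union_left _ (hSS' h')
              · exact Finset.mem_union_right _ (hTT' h')
          have hvmem : v ∈ (p.1 ∪ p.2) \ (S ∪ T) := Finset.mem_sdiff.mpr ⟨hvp, hvnotST⟩
          calc ((p.1 ∪ p.2) \ (S' ∪ T')).card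
              ≤ (((p.1 ∪ p.2) \ (S ∪ T)).erase v).card := Finset.card_le_card hsub2
            _ = ((p.1 ∪ p.2) \ (S ∪ T)).card - 1 := Finset.card_erase_of_mem hvmem
            _ ≤ w := by omega
      | succ q ihq =>
        intro Q S' T' hQc hS'T' hQd hSS' hTT' hbud' hcov
        have hQne : Q.Nonempty := Finset.card_pos.mp (by omega)
        obtain ⟨i, hiQ⟩ := hQne
        have hiS' : i ∉ S' := fun h => Finset.disjoint_left.mp hQd hiQ (Finset.mem_union_left _ h)
        have hiT' : i ∉ T' := fun h => Finset.disjoint_left.mp hQd hiQ (Finset.mem_union_right _ h)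
        have hdisj1 : Disjoint (Q.erase i) (insert i S' ∪ T') := by
          refine Finset.disjoint_left.mpr ?_
          intro x hx hx'
          obtain ⟨hxne, hxQ⟩ := Finset.mem_erase.mp hx
          rcases Finset.mem_union.mp hx' with h | h
          · rcases Finset.mem_insert.mp h with h | h
            · exact hxne h
            · exact Finset.disjoint_left.mp hQd hxQ (Finset.mem_union_left _ h)
          · exact Finset.disjoint_left.mp hQd hxQ (Finset.mem_union_right _ h)
        have hdisj2 : Disjoint (Q.erase i) (S' ∪ insert i T') := by
          refine Finset.disjoint_left.mpr ?_
          intro x hx hx'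
          obtain ⟨hxne, hxQ⟩ := Finset.mem_erase.mp hx
          rcases Finset.mem_union.mp hx' with h | h
          · exact Finset.disjoint_left.mp hQd hxQ (Finset.mem_union_left _ h)
          · rcases Finset.mem_insert.mp h with h | h
            · exact hxne h
            · exact Finset.disjoint_left.mp hQd hxQ (Finset.mem_union_right _ h)
        have hcov1 : (M.biUnion (fun p => p.1 ∪ p.2)) ⊆ insert i S' ∪ T' ∪ Q.erase i := by
          intro x hxV
          rcases Finset.mem_union.mp (hcov hxV) with h | h
          · rcases Finset.mem_union.mp h with h | h
            · exact Finset.mem_union_left _ (Finset.mem_union_left _ (Finset.mem_insert_of_mem h))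
            · exact Finset.mem_union_left _ (Finset.mem_union_right _ h)
          · by_cases hxi : x = i
            · subst hxi
              exact Finset.mem_union_left _ (Finset.mem_union_left _ (Finset.mem_insert_self _ _))
            · exact Finset.mem_union_right _ (Finset.mem_erase.mpr ⟨hxi, h⟩)
        have hcov2 : (M.biUnion (fun p => p.1 ∪ p.2)) ⊆ S' ∪ insert i T' ∪ Q.erase i := by
          intro x hxV
          rcases Finset.mem_union.mp (hcov hxV) with h | h
          · rcases Finset.mem_union.mp h with h | h
            · exact Finset.mem_union_left _ (Finset.mem_union_left _ h)
            · exact Finset.mem_union_left _ (Finset.mem_union_right _ (Finset.mem_insert_of_mem h))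
          · by_cases hxi : x = i
            · subst hxi
              exact Finset.mem_union_left _ (Finset.mem_union_right _ (Finset.mem_insert_self _ _))
            · exact Finset.mem_union_right _ (Finset.mem_erase.mpr ⟨hxi, h⟩)
        have hc1 := ihq (Q.erase i) (insert i S') T'
          (by rw [Finset.card_erase_of_mem hiQ, hQc]; omega)
          (Finset.disjoint_insert_left.mpr ⟨hiT', hS'T'⟩)
          hdisj1 (hSS'.trans (Finset.subset_insert _ _)) hTT'
          (by rw [Finset.card_insert_of_notMem hiS', Finset.card_erase_of_mem hiQ]; omega)
          hcov1
        have hc2 := ihq (Q.erase i) S' (insert i T')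
          (by rw [Finset.card_erase_of_mem hiQ, hQc]; omega)
          (Finset.disjoint_insert_right.mpr ⟨hiS', hS'T'⟩)
          hdisj2 hSS' (hTT'.trans (Finset.subset_insert _ _))
          (by rw [Finset.card_insert_of_notMem hiT', Finset.card_erase_of_mem hiQ]; omega)
          hcov2
        have hsplit : ∑ p ∈ F, Econj n E (p.1 ∪ S') (p.2 ∪ T')
            = ∑ p ∈ F, Econj n E (p.1 ∪ insert i S') (p.2 ∪ T')
            + ∑ p ∈ F, Econj n E (p.1 ∪ S') (p.2 ∪ insert i T') := by
          rw [← Finset.sum_add_distrib]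
          apply Finset.sum_congr rfl
          intro p hp
          rw [Finset.union_insert, Finset.union_insert]
          exact econj_split E _ _ i
        have hx := econj_split E S' T' i
        rw [hsplit, hx, mul_add]
        exact add_le_add hc1 hc2
    -- run the round
    have hbig : (t-1)*(w+1) + (t-1)*(w*w) ≤ (t-1)*((w+1)*(w+1)) := by
      have h : (w+1) + w*w ≤ (w+1)*(w+1) := by nlinarith
      calc (t-1)*(w+1) + (t-1)*(w*w) = (t-1)*((w+1)+w*w) := by ring
        _ ≤ (t-1)*((w+1)*(w+1)) := Nat.mul_le_mul_left _ h
    refine inner ((M.biUnion (fun p => p.1 ∪ p.2)) \ (S ∪ T)).card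
      ((M.biUnion (fun p => p.1 ∪ p.2)) \ (S ∪ T)) S T rfl hST
      Finset.sdiff_disjoint (le_refl _) (le_refl _) ?_ ?_
    · have h1 : S.card + T.card + ((M.biUnion (fun p => p.1 ∪ p.2)) \ (S ∪ T)).card + (t-1)*(w*w)
          ≤ S.card + T.card + ((t-1)*(w+1) + (t-1)*(w*w)) := by omega
      refine h1.trans ?_
      have h2 : S.card + T.card + ((t-1)*(w+1) + (t-1)*(w*w))
          ≤ S.card + T.card + (t-1)*((w+1)*(w+1)) := by omega
      exact h2.trans hbud
    · intro x hxV
      by_cases hxST : x ∈ S ∪ T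
      · exact Finset.mem_union_left _ hxST
      · exact Finset.mem_union_right _ (Finset.mem_sdiff.mpr ⟨hxV, hxST⟩)

/-- Decision-tree bound: if every `t` distinct conjunctions of a degree-`≤ d`
family `F` are jointly inconsistent, with `(t-1)d² ≤ n`, then any degree
`D ≥ (t-1)d²` pseudoexpectation gives `∑_{C ∈ F} Ẽ[C] ≤ t - 1`. -/
theorem decision_tree_bound (n d D t : ℕ) (ht : 1 ≤ t)
    (hn : (t - 1) * d ^ 2 ≤ n) (hD : (t - 1) * d ^ 2 ≤ D)
    (F : Finset (Finset (Fin n) × Finset (Fin n)))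
    (hdeg : ∀ p ∈ F, Disjoint p.1 p.2 ∧ p.1.card + p.2.card ≤ d)
    (hincons : ∀ G ⊆ F, G.card = t → ¬ ∃ x : Fin n → Bool, ∀ p ∈ G, Sat n x p)
    (E : Finset (Fin n) → ℝ) (hnorm : E ∅ = 1)
    (hnonneg : ∀ S T : Finset (Fin n), Disjoint S T → S.card + T.card ≤ D →
      0 ≤ Econj n E S T) :
    ∑ p ∈ F, Econj n E p.1 p.2 ≤ (t : ℝ) - 1 := by
  have hmain := dtb_main n d D t ht F hdeg hincons E hnonneg d ∅ ∅
    (Finset.disjoint_empty_left ∅)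
    (by simpa [← pow_two] using hD)
    (by
      intro p hpF _ _
      calc ((p.1 ∪ p.2) \ (∅ ∪ ∅)).card = (p.1 ∪ p.2).card := by simp
        _ ≤ p.1.card + p.2.card := Finset.card_union_le _ _
        _ ≤ d := (hdeg p hpF).2)
  have hE : Econj n E ∅ ∅ = 1 := by
    simp [Econj, hnorm]
  simpa [hE] using hmain
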